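/- Consider a uniform instance in which W is an integral multiple of Max, say W = k·Max for some k ≥ 1. Then the maximum profit of a feasible contiguous coloring (OPT_FSAP) equals Max times the maximum cardinality of a k-colorable subfamily S ⊆ Fin n. -/

import Mathlib

open Finset

/-- Distinct jobs `i, j` overlap if their half-open intervals intersect. -/
def Overlap {n : ℕ} (s e : Fin n → ℝ) (i j : Fin n) : Prop :=
  i ≠ j ∧ (Set.Ico (s i) (e i) ∩ Set.Ico (s j) (e j)).Nonempty

/-- A feasible contiguous coloring (FSAP solution). -/
def IsContigColoring {n : ℕ} (W : ℕ) (s e : Fin n → ℝ) (rmax : Fin n → ℕ)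
    (c : Fin n → Finset (Fin W)) : Prop :=
  (∀ i, c i = ∅ ∨ ∃ a b : Fin W, a ≤ b ∧ c i = Finset.Icc a b) ∧
  (∀ i, (c i).card ≤ rmax i) ∧
  (∀ i j, Overlap s e i j → c i ∩ c j = ∅)

/-- Profit of a contiguous coloring. -/
def colProfit {n W : ℕ} (p : Fin n → ℝ) (c : Fin n → Finset (Fin W)) : ℝ :=
  ∑ i, p i * (c i).card

/-- A subfamily `S` is `k`-colorable if every point is covered at most `k` times. -/
def KColorable {n : ℕ} (s e : Fin n → ℝ) (k : ℕ) (S : Finset (Fin n)) : Prop :=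
  ∀ t : ℝ, (S.filter (fun i => s i ≤ t ∧ t < e i)).card ≤ k

lemma overlap_symm {n : ℕ} {s e : Fin n → ℝ} {i j : Fin n} (h : Overlap s e i j) :
    Overlap s e j i := ⟨h.1.symm, by rw [Set.inter_comm]; exact h.2⟩

/-- helper: two numbers in a window of width < Max with equal residues mod Max are equal. -/
lemma eq_of_mod_eq_of_close {Max x y : ℕ} (hMax : 1 ≤ Max) (hxy : x ≤ y)
    (hmod : x % Max = y % Max) (hlt : y - x < Max) : x = y := by
  have hdvd : Max ∣ y - x := (Nat.modEq_iff_dvd' hxy).1 hmod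
  obtain ⟨q, hq⟩ := hdvd
  have hq0 : q = 0 := by
    by_contra hq0
    have : Max ≤ Max * q := Nat.le_mul_of_pos_right Max (Nat.pos_of_ne_zero hq0)
    omega
  rw [hq0, Nat.mul_zero] at hq
  omega

/-- residues mod Max are injective on a contiguous color set of size ≤ Max. -/
lemma contig_mod_injOn {W Max : ℕ} (hMax : 1 ≤ Max) (c : Finset (Fin W))
    (hc : c = ∅ ∨ ∃ a b : Fin W, a ≤ b ∧ c = Finset.Icc a b) (hcard : c.card ≤ Max) :
    Set.InjOn (fun w : Fin W => (w : ℕ) % Max) (c : Set (Fin W)) := by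
  rcases hc with rfl | ⟨a, b, hab, rfl⟩
  · simp [Set.InjOn]
  · intro w1 h1 w2 h2 heq
    simp only [Finset.coe_Icc, Set.mem_Icc] at h1 h2
    rw [Fin.card_Icc] at hcard
    have hb1 : (a : ℕ) ≤ (w1 : ℕ) := h1.1
    have hb2 : (w1 : ℕ) ≤ (b : ℕ) := h1.2
    have hb3 : (a : ℕ) ≤ (w2 : ℕ) := h2.1
    have hb4 : (w2 : ℕ) ≤ (b : ℕ) := h2.2
    simp only at heq
    rcases le_total (w1 : ℕ) (w2 : ℕ) with h | h
    · exact Fin.ext (eq_of_mod_eq_of_close hMax h heq (by omega))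
    · exact Fin.ext ((eq_of_mod_eq_of_close hMax h heq.symm (by omega))).symm

/-- every k-colorable family admits a proper k-coloring of its overlap graph. -/
lemma exists_proper_coloring {n k : ℕ} (hk : 1 ≤ k) (s e : Fin n → ℝ) (hse : ∀ i, s i < e i)
    (S : Finset (Fin n)) (hS : KColorable s e k S) :
    ∃ f : Fin n → Fin k, ∀ i ∈ S, ∀ j ∈ S, Overlap s e i j → f i ≠ f j := by
  classical
  induction S using Finset.strongInduction with
  | _ S ih =>
    rcases S.eq_empty_or_nonempty with rfl | hne
    · exact ⟨fun _ => ⟨0, hk⟩, by simp⟩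
    · obtain ⟨i, hiS, hmax⟩ := S.exists_max_image s hne
      have hsub : S.erase i ⊂ S := Finset.erase_ssubset hiS
      have hS' : KColorable s e k (S.erase i) := fun t =>
        le_trans (Finset.card_le_card (Finset.filter_subset_filter _ (S.erase_subset i))) (hS t)
      obtain ⟨f, hf⟩ := ih _ hsub hS'
      set N := (S.erase i).filter (fun j => Overlap s e i j) with hNdef
      have hNcard : N.card < k := by
        have hsubT : N ⊆ (S.filter (fun j => s j ≤ s i ∧ s i < e j)).erase i := by
          intro j hj
          simp only [hNdef, Finset.mem_filter, Finset.mem_erase] at hj ⊢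
          obtain ⟨⟨hji, hjS⟩, hov⟩ := hj
          obtain ⟨t0, ht0i, ht0j⟩ := hov.2
          exact ⟨hji, hjS, hmax j hjS, lt_of_le_of_lt ht0i.1 ht0j.2⟩
        have h1 := Finset.card_le_card hsubT
        have h2 : i ∈ S.filter (fun j => s j ≤ s i ∧ s i < e j) := by
          simp [hiS, le_refl, hse i]
        have h3 := hS (s i)
        rw [Finset.card_erase_of_mem h2] at h1
        have h4 : 1 ≤ (S.filter (fun j => s j ≤ s i ∧ s i < e j)).card :=
          Finset.card_pos.2 ⟨i, h2⟩
        omega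
      have himg : (N.image f).card < k := lt_of_le_of_lt Finset.card_image_le hNcard
      have hex : ∃ x : Fin k, x ∉ N.image f := by
        by_contra h
        push_neg at h
        have hsub2 : (univ : Finset (Fin k)) ⊆ N.image f := fun x _ => h x
        have := Finset.card_le_card hsub2
        simp only [Finset.card_univ, Fintype.card_fin] at this
        omega
      obtain ⟨x, hx⟩ := hex
      refine ⟨Function.update f i x, ?_⟩
      intro i' hi' j' hj' hov
      rcases eq_or_ne i' i with rfl | hi'ne
      · have hj'ne : j' ≠ i' := fun h => hov.1 h.symm
        have hj'N : j' ∈ N := by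
          simp only [hNdef, Finset.mem_filter, Finset.mem_erase]
          exact ⟨⟨hj'ne, hj'⟩, hov⟩
        rw [Function.update_self, Function.update_of_ne hj'ne]
        exact fun h => hx (h ▸ Finset.mem_image_of_mem f hj'N)
      · rcases eq_or_ne j' i with rfl | hj'ne
        · have hi'N : i' ∈ N := by
            simp only [hNdef, Finset.mem_filter, Finset.mem_erase]
            exact ⟨⟨hi'ne, hi'⟩, overlap_symm hov⟩
          rw [Function.update_self, Function.update_of_ne hi'ne]
          exact fun h => hx (h.symm ▸ Finset.mem_image_of_mem f hi'N)
        · rw [Function.update_of_ne hi'ne, Function.update_of_ne hj'ne]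
          exact hf i' (Finset.mem_erase.2 ⟨hi'ne, hi'⟩) j' (Finset.mem_erase.2 ⟨hj'ne, hj'⟩) hov

/-- disjointness of distinct Max-blocks. -/
lemma blocks_disjoint {Max u v w : ℕ} (hMax : 1 ≤ Max) (huv : u < v)
    (h1 : u * Max ≤ w) (h2 : w ≤ u * Max + (Max - 1)) (h3 : v * Max ≤ w) : False := by
  have h : (u + 1) * Max ≤ v * Max := Nat.mul_le_mul_right _ (by omega)
  rw [add_one_mul] at h
  omega

theorem stmt_0 {n : ℕ} (s e : Fin n → ℝ) (hse : ∀ i, s i < e i)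
    (W : ℕ) (hW : 1 ≤ W) (rmax : Fin n → ℕ) (hrmax : ∀ i, rmax i ≤ W)
    (p : Fin n → ℝ) (hp : ∀ i, 1 ≤ p i)
    (Max : ℕ) (hMax1 : 1 ≤ Max) (hMaxW : Max ≤ W)
    (hup : ∀ i, p i = 1) (hur : ∀ i, rmax i = Max)
    (k : ℕ) (hk : 1 ≤ k) (hWkMax : W = k * Max)
    (OPT : ℝ)
    (hOPT : IsGreatest {P : ℝ | ∃ c : Fin n → Finset (Fin W),
      IsContigColoring W s e rmax c ∧ colProfit p c = P} OPT)
    (M : ℕ)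
    (hM : IsGreatest {m : ℕ | ∃ S : Finset (Fin n), KColorable s e k S ∧ S.card = m} M) :
    OPT = (Max : ℝ) * M := by
  classical
  -- UPPER BOUND
  have hub : ∀ c : Fin n → Finset (Fin W), IsContigColoring W s e rmax c →
      colProfit p c ≤ (Max : ℝ) * M := by
    intro c hc
    obtain ⟨hcontig, hcard, hdisj⟩ := hc
    -- each residue class gives a k-colorable subfamily
    have hUr : ∀ r : ℕ, KColorable s e k
        ((univ : Finset (Fin n)).filter (fun i => ∃ w ∈ c i, (w : ℕ) % Max = r)) := by
      intro r t
      set F := (((univ : Finset (Fin n)).filter (fun i => ∃ w ∈ c i, (w : ℕ) % Max = r)).filter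
        (fun i => s i ≤ t ∧ t < e i)) with hF
      set g : Fin n → Fin W := fun i =>
        if h : ∃ w ∈ c i, (w : ℕ) % Max = r then h.choose else ⟨0, by omega⟩ with hg
      have hgspec : ∀ i ∈ F, g i ∈ c i ∧ ((g i : ℕ)) % Max = r := by
        intro i hi
        simp only [hF, Finset.mem_filter, Finset.mem_univ, true_and] at hi
        obtain ⟨hex, -⟩ := hi
        simp only [hg, dif_pos hex]
        exact hex.choose_spec
      have h1 : F.card ≤ ((univ : Finset (Fin W)).filter (fun w : Fin W => (w : ℕ) % Max = r)).card := by
        apply Finset.card_le_card_of_injOn g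
        · intro i hi
          simp only [Finset.mem_coe, Finset.mem_filter, Finset.mem_univ, true_and]
          exact (hgspec i hi).2
        · intro i hi j hj hgij
          by_contra hne
          have hiF : s i ≤ t ∧ t < e i := by
            have := hi; simp only [hF, Finset.mem_coe, Finset.mem_filter] at this; exact this.2
          have hjF : s j ≤ t ∧ t < e j := by
            have := hj; simp only [hF, Finset.mem_coe, Finset.mem_filter] at this; exact this.2
          have hov : Overlap s e i j :=
            ⟨hne, ⟨t, ⟨hiF.1, hiF.2⟩, ⟨hjF.1, hjF.2⟩⟩⟩
          have hempty := hdisj i j hov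
          have hmem : g i ∈ c i ∩ c j := Finset.mem_inter.2
            ⟨(hgspec i (by simpa using hi)).1, hgij ▸ (hgspec j (by simpa using hj)).1⟩
          rw [hempty] at hmem
          exact absurd hmem (Finset.notMem_empty _)
      have h2 : ((univ : Finset (Fin W)).filter (fun w : Fin W => (w : ℕ) % Max = r)).card ≤ k := by
        refine le_trans (Finset.card_le_card_of_injOn (t := Finset.range k)
          (fun w : Fin W => (w : ℕ) / Max) ?_ ?_) (by simp)
        · intro w hw
          simp only [Finset.coe_range, Set.mem_Iio]
          exact (Nat.div_lt_iff_lt_mul (k := Max) (by omega)).2 (by rw [← hWkMax]; exact w.isLt)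
        · intro w1 hw1 w2 hw2 hdiv
          simp only [Finset.coe_filter, Set.mem_setOf_eq] at hw1 hw2
          apply Fin.ext
          have e1 := Nat.div_add_mod (w1 : ℕ) Max
          have e2 := Nat.div_add_mod (w2 : ℕ) Max
          simp only at hdiv
          rw [hdiv, hw1.2] at e1
          rw [hw2.2] at e2
          omega
      exact le_trans h1 h2
    -- counting: total number of colors used, via residues
    have key : ∑ i : Fin n, (c i).card ≤ Max * M := by
      have hstep1 : ∀ i : Fin n, (c i).card =
          ((Finset.range Max).filter (fun r => ∃ w ∈ c i, (w : ℕ) % Max = r)).card := by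
        intro i
        have hinj := contig_mod_injOn hMax1 (c i) (hcontig i)
          (by rw [← hur i]; exact hcard i)
        have himg : (c i).image (fun w : Fin W => (w : ℕ) % Max) =
            (Finset.range Max).filter (fun r => ∃ w ∈ c i, (w : ℕ) % Max = r) := by
          ext r
          simp only [Finset.mem_image, Finset.mem_filter, Finset.mem_range]
          constructor
          · rintro ⟨w, hw, rfl⟩
            exact ⟨Nat.mod_lt _ (by omega), w, hw, rfl⟩
          · rintro ⟨-, w, hw, rfl⟩
            exact ⟨w, hw, rfl⟩
        rw [← Finset.card_image_of_injOn hinj, himg]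
      calc ∑ i : Fin n, (c i).card
          = ∑ i : Fin n, ∑ r ∈ Finset.range Max,
              (if ∃ w ∈ c i, (w : ℕ) % Max = r then 1 else 0) := by
            refine Finset.sum_congr rfl (fun i _ => ?_)
            rw [hstep1 i, Finset.card_filter]
        _ = ∑ r ∈ Finset.range Max,
              ((univ : Finset (Fin n)).filter (fun i => ∃ w ∈ c i, (w : ℕ) % Max = r)).card := by
            rw [Finset.sum_comm]
            exact Finset.sum_congr rfl (fun r _ => (Finset.card_filter _ _).symm)
        _ ≤ ∑ _r ∈ Finset.range Max, M :=
            Finset.sum_le_sum (fun r _ => hM.2 ⟨_, hUr r, rfl⟩)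
        _ = Max * M := by rw [Finset.sum_const, Finset.card_range, smul_eq_mul]
    -- cast to ℝ
    have : colProfit p c = ((∑ i : Fin n, (c i).card : ℕ) : ℝ) := by
      rw [colProfit, Nat.cast_sum]
      exact Finset.sum_congr rfl (fun i _ => by rw [hup i, one_mul])
    rw [this]
    calc ((∑ i : Fin n, (c i).card : ℕ) : ℝ) ≤ ((Max * M : ℕ) : ℝ) := Nat.cast_le.2 key
      _ = (Max : ℝ) * M := by push_cast; ring
  -- LOWER BOUND: build a coloring from a max k-colorable family
  obtain ⟨S, hSk, hScard⟩ := hM.1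
  obtain ⟨f, hfprop⟩ := exists_proper_coloring hk s e hse S hSk
  have hbound : ∀ i : Fin n, (f i : ℕ) * Max + (Max - 1) < W := by
    intro i
    have h1 : (f i : ℕ) * Max + Max ≤ k * Max := by
      calc (f i : ℕ) * Max + Max = ((f i : ℕ) + 1) * Max := by ring
        _ ≤ k * Max := Nat.mul_le_mul_right _ (Nat.succ_le_of_lt (f i).isLt)
    rw [hWkMax]
    omega
  set a : Fin n → Fin W := fun i => ⟨(f i : ℕ) * Max, by have := hbound i; omega⟩ with ha
  set b : Fin n → Fin W := fun i => ⟨(f i : ℕ) * Max + (Max - 1), hbound i⟩ with hb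
  set c : Fin n → Finset (Fin W) := fun i => if i ∈ S then Finset.Icc (a i) (b i) else ∅ with hcdef
  have hcardc : ∀ i ∈ S, (c i).card = Max := by
    intro i hi
    simp only [hcdef, if_pos hi, Fin.card_Icc, ha, hb]
    omega
  have hfeas : IsContigColoring W s e rmax c := by
    refine ⟨?_, ?_, ?_⟩
    · intro i
      by_cases hi : i ∈ S
      · refine Or.inr ⟨a i, b i, ?_, by simp [hcdef, if_pos hi]⟩
        simp only [Fin.le_def, ha, hb]
        omega
      · exact Or.inl (by simp [hcdef, if_neg hi])
    · intro i
      by_cases hi : i ∈ S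
      · rw [hcardc i hi, hur i]
      · simp [hcdef, if_neg hi]
    · intro i j hov
      by_cases hi : i ∈ S
      · by_cases hj : j ∈ S
        · have hne : f i ≠ f j := hfprop i hi j hj hov
          simp only [hcdef, if_pos hi, if_pos hj]
          rw [Finset.eq_empty_iff_forall_notMem]
          intro w hw
          rw [Finset.mem_inter, Finset.mem_Icc, Finset.mem_Icc] at hw
          obtain ⟨⟨hw1, hw2⟩, hw3, hw4⟩ := hw
          simp only [Fin.le_def, ha, hb] at hw1 hw2 hw3 hw4
          have hvne : (f i : ℕ) ≠ (f j : ℕ) := fun h => hne (Fin.ext h)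
          rcases lt_or_gt_of_ne hvne with h | h
          · exact blocks_disjoint hMax1 h hw1 hw2 hw3
          · exact blocks_disjoint hMax1 h hw3 hw4 hw1
        · simp [hcdef, if_neg hj]
      · simp [hcdef, if_neg hi]
  have hprofit : colProfit p c = (Max : ℝ) * M := by
    rw [colProfit]
    have : ∀ i : Fin n, p i * ((c i).card : ℝ) = if i ∈ S then (Max : ℝ) else 0 := by
      intro i
      by_cases hi : i ∈ S
      · rw [if_pos hi, hup i, one_mul, hcardc i hi]
      · rw [if_neg hi, hup i, one_mul]
        simp [hcdef, if_neg hi]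
    rw [Finset.sum_congr rfl (fun i _ => this i), Finset.sum_ite_mem, Finset.univ_inter,
      Finset.sum_const, hScard, nsmul_eq_mul]
    ring
  have hlow : (Max : ℝ) * M ≤ OPT := hOPT.2 ⟨c, hfeas, hprofit⟩
  obtain ⟨c0, hc0, hP0⟩ := hOPT.1
  have hhigh : OPT ≤ (Max : ℝ) * M := hP0 ▸ hub c0 hc0
  linarith
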